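/- A continuous surjection f: X → Y of digital images is shy if and only if the multivalued function f⁻¹ has weak continuity (for adjacent y,y' in Y, the sets f⁻¹(y) and f⁻¹(y') are adjacent, i.e., contain equal or adjacent points) and f⁻¹(y) is connected for every y ∈ Y. -/

import Mathlib

/-- A subset `A` is connected under adjacency `κ` if any two of its points are
joined by a path within `A` whose consecutive points are `κ`-adjacent. -/
def DConn {X : Type*} (κ : X → X → Prop) (A : Set X) : Prop :=
  ∀ a ∈ A, ∀ b ∈ A,
    Relation.ReflTransGen (fun u v => κ u v ∧ u ∈ A ∧ v ∈ A) a b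

/-- `f` is digitally continuous if images of connected sets are connected. -/
def DCont {X Y : Type*} (κ : X → X → Prop) (lam : Y → Y → Prop) (f : X → Y) : Prop :=
  ∀ A : Set X, DConn κ A → DConn lam (f '' A)

/-- `f` is shy: a continuous surjection with connected point preimages and
connected preimages of adjacent pairs. -/
def DShy {X Y : Type*} (κ : X → X → Prop) (lam : Y → Y → Prop) (f : X → Y) : Prop :=
  DCont κ lam f ∧ Function.Surjective f ∧
    (∀ y : Y, DConn κ (f ⁻¹' {y})) ∧
    ∀ y₀ y₁ : Y, lam y₀ y₁ → DConn κ (f ⁻¹' {y₀, y₁})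

lemma path_mono {X : Type*} {κ : X → X → Prop} {A B : Set X} (h : A ⊆ B) {a b : X}
    (hp : Relation.ReflTransGen (fun u v => κ u v ∧ u ∈ A ∧ v ∈ A) a b) :
    Relation.ReflTransGen (fun u v => κ u v ∧ u ∈ B ∧ v ∈ B) a b :=
  by
    induction hp with
    | refl => exact Relation.ReflTransGen.refl
    | tail _ hr ih => exact ih.tail ⟨hr.1, h hr.2.1, h hr.2.2⟩

lemma extract_adj {X Y : Type*} {κ : X → X → Prop} {f : X → Y} {y y' : Y}
    (hne : y ≠ y') {a b : X}
    (hp : Relation.ReflTransGen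
      (fun u v => κ u v ∧ u ∈ f ⁻¹' {y, y'} ∧ v ∈ f ⁻¹' {y, y'}) a b)
    (ha : f a = y) (hb : f b = y') :
    ∃ u ∈ f ⁻¹' {y}, ∃ v ∈ f ⁻¹' {y'}, u = v ∨ κ u v := by
  induction hp using Relation.ReflTransGen.head_induction_on with
  | refl => exact absurd (ha.symm.trans hb) hne
  | head step _ ih =>
    rename_i p q _
    rcases step with ⟨hκ, _, hq⟩
    rcases hq with hq | hq
    · exact ih hq
    · exact ⟨p, ha, q, hq, Or.inr hκ⟩

theorem shy_iff_weak_continuity_and_connected_fibers {X Y : Type*}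
    (κ : X → X → Prop) (lam : Y → Y → Prop)
    (hκs : Symmetric κ) (hκi : Irreflexive κ)
    (hls : Symmetric lam) (hli : Irreflexive lam)
    (f : X → Y) (hcont : DCont κ lam f) (hsurj : Function.Surjective f) :
    DShy κ lam f ↔
      ((∀ y y' : Y, lam y y' →
          ∃ a ∈ f ⁻¹' {y}, ∃ b ∈ f ⁻¹' {y'}, a = b ∨ κ a b) ∧
        ∀ y : Y, DConn κ (f ⁻¹' {y})) := by
  constructor
  · rintro ⟨-, -, hfib, hpair⟩
    refine ⟨fun y y' hl => ?_, hfib⟩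
    have hne : y ≠ y' := fun h => hli y (h ▸ hl)
    obtain ⟨a, ha⟩ := hsurj y
    obtain ⟨b, hb⟩ := hsurj y'
    have hp := hpair y y' hl a (by simp [ha]) b (by simp [hb])
    exact extract_adj hne hp ha hb
  · rintro ⟨hweak, hfib⟩
    refine ⟨hcont, hsurj, hfib, fun y₀ y₁ hl => ?_⟩
    have hne : y₀ ≠ y₁ := fun h => hli y₀ (h ▸ hl)
    have hsub0 : f ⁻¹' {y₀} ⊆ f ⁻¹' {y₀, y₁} := fun x hx => Or.inl hx
    have hsub1 : f ⁻¹' {y₁} ⊆ f ⁻¹' {y₀, y₁} := fun x hx => Or.inr hx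
    obtain ⟨p, hp, q, hq, hpq⟩ := hweak y₀ y₁ hl
    -- any point of the pair-preimage is connected to p or q within the set
    have key : ∀ x ∈ f ⁻¹' {y₀, y₁},
        Relation.ReflTransGen
          (fun u v => κ u v ∧ u ∈ f ⁻¹' {y₀, y₁} ∧ v ∈ f ⁻¹' {y₀, y₁}) x p ∨
        Relation.ReflTransGen
          (fun u v => κ u v ∧ u ∈ f ⁻¹' {y₀, y₁} ∧ v ∈ f ⁻¹' {y₀, y₁}) x q := by
      rintro x (hx | hx)
      · exact Or.inl (path_mono hsub0 (hfib y₀ x hx p hp))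
      · exact Or.inr (path_mono hsub1 (hfib y₁ x hx q hq))
    have hpq' : Relation.ReflTransGen
        (fun u v => κ u v ∧ u ∈ f ⁻¹' {y₀, y₁} ∧ v ∈ f ⁻¹' {y₀, y₁}) p q := by
      rcases hpq with rfl | hκ
      · exact Relation.ReflTransGen.refl
      · exact Relation.ReflTransGen.single ⟨hκ, hsub0 hp, hsub1 hq⟩
    have symmpath : ∀ {u v : X},
        Relation.ReflTransGen
          (fun u v => κ u v ∧ u ∈ f ⁻¹' {y₀, y₁} ∧ v ∈ f ⁻¹' {y₀, y₁}) u v →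
        Relation.ReflTransGen
          (fun u v => κ u v ∧ u ∈ f ⁻¹' {y₀, y₁} ∧ v ∈ f ⁻¹' {y₀, y₁}) v u := by
      intro u v h
      induction h with
      | refl => exact Relation.ReflTransGen.refl
      | tail h step ih => exact Relation.ReflTransGen.head ⟨hκs step.1, step.2.2, step.2.1⟩ ih
    intro a ha b hb
    rcases key a ha with hA | hA <;> rcases key b hb with hB | hB
    · exact hA.trans (symmpath hB)
    · exact hA.trans (hpq'.trans (symmpath hB))
    · exact hA.trans ((symmpath hpq').trans (symmpath hB))
    · exact hA.trans (symmpath hB)
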